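/- arXiv:2601.11862 — 2 statements merged into one kernel-verified Lean document; each statement's English description precedes it below -/
import Mathlib

section
/- Fix σ_X² > 0 and D ∈ (0, σ_X²). Define SNR(γ) = (σ_X² + γ - D)² / (4σ_X²γ - (σ_X² + γ - D)²) for γ in the interval I_D = [(σ_X - √D)², (σ_X + √D)²] where the denominator is nonnegative. Then SNR is strictly decreasing on [(σ_X - √D)², σ_X² - D] and strictly increasing on [σ_X² - D, (σ_X + √D)²], and attains its minimum (σ_X² - D)/D at γ = σ_X² - D. -/
open Real Set

/-- With `σX > 0`, `D ∈ (0, σX²)` and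
`SNR(γ) = (σX² + γ - D)² / (4σX²γ - (σX² + γ - D)²)` for `γ` in the interior of
`I_D = [(σX - √D)², (σX + √D)²]`, SNR is strictly decreasing up to `σX² - D`,
strictly increasing afterwards, and attains its minimum `(σX² - D)/D` at `γ = σX² - D`. -/
theorem snr_unimodal (σX D : ℝ) (hσ : 0 < σX) (hD0 : 0 < D) (hDσ : D < σX ^ 2) :
    let SNR : ℝ → ℝ := fun γ =>
      (σX ^ 2 + γ - D) ^ 2 / (4 * σX ^ 2 * γ - (σX ^ 2 + γ - D) ^ 2)
    StrictAntiOn SNR (Ioc ((σX - Real.sqrt D) ^ 2) (σX ^ 2 - D)) ∧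
    StrictMonoOn SNR (Ico (σX ^ 2 - D) ((σX + Real.sqrt D) ^ 2)) ∧
    (∀ γ ∈ Ioo ((σX - Real.sqrt D) ^ 2) ((σX + Real.sqrt D) ^ 2),
      SNR (σX ^ 2 - D) ≤ SNR γ) ∧
    SNR (σX ^ 2 - D) = (σX ^ 2 - D) / D := by
  intro SNR
  set r := Real.sqrt D with hrdef
  have hr2 : r ^ 2 = D := Real.sq_sqrt hD0.le
  have hr0 : 0 < r := Real.sqrt_pos.mpr hD0
  have hrσ : r < σX := by
    nlinarith [hr2, hr0, hσ]
  have hs0 : 0 < σX ^ 2 - D := by linarith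
  have hlo : (σX - r) ^ 2 < σX ^ 2 - D := by nlinarith
  have hhi : σX ^ 2 - D < (σX + r) ^ 2 := by nlinarith
  -- denominator positivity on the open interval
  have hQ : ∀ γ, (σX - r) ^ 2 < γ → γ < (σX + r) ^ 2 →
      0 < 4 * σX ^ 2 * γ - (σX ^ 2 + γ - D) ^ 2 := by
    intro γ h1 h2
    nlinarith [mul_pos (sub_pos.mpr h1) (sub_pos.mpr h2)]
  -- key comparison
  have key : ∀ x y, (σX - r) ^ 2 < x → x < (σX + r) ^ 2 →
      (σX - r) ^ 2 < y → y < (σX + r) ^ 2 →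
      (σX ^ 2 - D) ^ 2 < x * y → x < y → SNR x < SNR y := by
    intro x y hx1 hx2 hy1 hy2 hprod hxy
    have hQx := hQ x hx1 hx2
    have hQy := hQ y hy1 hy2
    simp only [SNR]
    rw [div_lt_div_iff₀ hQx hQy]
    nlinarith [mul_pos (mul_pos (show (0:ℝ) < 4 * σX ^ 2 by positivity)
      (sub_pos.mpr hxy)) (sub_pos.mpr hprod)]
  have key' : ∀ x y, (σX - r) ^ 2 < x → x < (σX + r) ^ 2 →
      (σX - r) ^ 2 < y → y < (σX + r) ^ 2 →
      x * y < (σX ^ 2 - D) ^ 2 → x < y → SNR y < SNR x := by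
    intro x y hx1 hx2 hy1 hy2 hprod hxy
    have hQx := hQ x hx1 hx2
    have hQy := hQ y hy1 hy2
    simp only [SNR]
    rw [div_lt_div_iff₀ hQy hQx]
    nlinarith [mul_pos (mul_pos (show (0:ℝ) < 4 * σX ^ 2 by positivity)
      (sub_pos.mpr hxy)) (sub_pos.mpr hprod)]
  have hx0 : ∀ x, (σX - r) ^ 2 < x → 0 < x := fun x hx =>
    lt_of_le_of_lt (sq_nonneg _) hx
  refine ⟨?_, ?_, ?_, ?_⟩
  · -- strictly decreasing
    intro x hx y hy hxy
    exact key' x y hx.1 (lt_of_le_of_lt hx.2 hhi) hy.1 (lt_of_le_of_lt hy.2 hhi)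
      (by nlinarith [hx0 x hx.1, hy.2, hx.2]) hxy
  · -- strictly increasing
    intro x hx y hy hxy
    exact key x y (lt_of_lt_of_le hlo hx.1) hx.2 (lt_of_lt_of_le hlo hy.1) hy.2
      (by nlinarith [hx.1, hs0]) hxy
  · -- minimum
    intro γ hγ
    have hQγ := hQ γ hγ.1 hγ.2
    have hQs := hQ _ hlo hhi
    simp only [SNR]
    rw [div_le_div_iff₀ hQs hQγ]
    nlinarith [mul_nonneg (mul_nonneg (show (0:ℝ) ≤ 4 * σX ^ 2 by positivity)
      hs0.le) (sq_nonneg (γ - (σX ^ 2 - D)))]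
  · -- value at minimum
    simp only [SNR]
    have h1 : 4 * σX ^ 2 * (σX ^ 2 - D) - (σX ^ 2 + (σX ^ 2 - D) - D) ^ 2
        = 4 * D * (σX ^ 2 - D) := by ring
    rw [h1, div_eq_div_iff (by positivity) hD0.ne']
    ring
end

section
/- Given a prefix-free binary code with codeword lengths ℓ(k) for a discrete random variable K, and t > 0, Campbell's cost L(t) = (1/t) log₂ E[2^{t ℓ(K)}] satisfies L(t) ≥ H_α(K) where α = 1/(t+1), for any lengths satisfying the Kraft inequality ∑_k 2^{-ℓ(k)} ≤ 1. -/
/-- Campbell's cost bound: for a pmf `p` on a countable set, codeword lengths `ℓ`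
satisfying Kraft's inequality `∑ 2^{-ℓ(k)} ≤ 1`, and `t > 0` with `α = 1/(t+1)`,
Campbell's cost `L(t) = (1/t) log₂ E[2^{t ℓ(K)}]` satisfies `L(t) ≥ H_α(K)`. -/
theorem campbell_cost_lower_bound (p : ℕ+ → ℝ) (ℓ : ℕ+ → ℕ)
    (hpos : ∀ k, 0 ≤ p k) (hsum : Summable p) (hp1 : ∑' k, p k = 1)
    (t α : ℝ) (ht : 0 < t) (hα : α = 1 / (t + 1))
    (hkraft : Summable (fun k => (2:ℝ) ^ (-(ℓ k : ℝ))) ∧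
      ∑' k : ℕ+, (2:ℝ) ^ (-(ℓ k : ℝ)) ≤ 1)
    (hmom : Summable fun k => p k * (2:ℝ) ^ (t * (ℓ k : ℝ)))
    (hren : Summable fun k => (p k) ^ α) :
    (1 / (1 - α)) * Real.logb 2 (∑' k : ℕ+, (p k) ^ α)
      ≤ (1 / t) * Real.logb 2 (∑' k : ℕ+, p k * (2:ℝ) ^ (t * (ℓ k : ℝ))) := by
  have ht1 : (0:ℝ) < t + 1 := by linarith
  have hα0 : 0 < α := by rw [hα]; positivity
  have hα1 : α < 1 := by
    rw [hα, div_lt_one ht1]; linarith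
  have h1α : 0 < 1 - α := by linarith
  have htα : t * α = 1 - α := by
    rw [hα]; field_simp; ring
  -- Hölder
  set f : ℕ+ → ℝ := fun k => (p k * (2:ℝ) ^ (t * (ℓ k : ℝ))) ^ α with hf
  set g : ℕ+ → ℝ := fun k => ((2:ℝ) ^ (-(ℓ k : ℝ))) ^ (1 - α) with hg
  have h2 : (0:ℝ) < 2 := by norm_num
  have hpm : ∀ k, (0:ℝ) ≤ p k * (2:ℝ) ^ (t * (ℓ k : ℝ)) :=
    fun k => mul_nonneg (hpos k) (Real.rpow_nonneg h2.le _)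
  have hfnn : ∀ k, 0 ≤ f k := fun k => Real.rpow_nonneg (hpm k) _
  have hgnn : ∀ k, 0 ≤ g k := fun k => Real.rpow_nonneg (by positivity) _
  have hconj : (1/α).HolderConjugate (1/(1-α)) := by
    rw [Real.holderConjugate_iff]
    constructor
    · rw [lt_div_iff₀ hα0]; linarith
    · field_simp; ring
  have hfg : ∀ k, f k * g k = (p k) ^ α := by
    intro k
    have hz : t * (ℓ k : ℝ) * α + -(ℓ k : ℝ) * (1 - α) = 0 := by
      linear_combination (ℓ k : ℝ) * htα
    show (p k * (2:ℝ) ^ (t * (ℓ k : ℝ))) ^ α * ((2:ℝ) ^ (-(ℓ k : ℝ))) ^ (1 - α) = (p k) ^ α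
    rw [Real.mul_rpow (hpos k) (Real.rpow_nonneg h2.le _),
      ← Real.rpow_mul h2.le, ← Real.rpow_mul h2.le, mul_assoc,
      ← Real.rpow_add h2, hz, Real.rpow_zero, mul_one]
  have hfP : ∀ k, f k ^ (1/α) = p k * (2:ℝ) ^ (t * (ℓ k : ℝ)) := by
    intro k
    rw [hf, ← Real.rpow_mul (hpm k), mul_one_div, div_self hα0.ne', Real.rpow_one]
  have hgQ : ∀ k, g k ^ (1/(1-α)) = (2:ℝ) ^ (-(ℓ k : ℝ)) := by
    intro k
    rw [hg, ← Real.rpow_mul (by positivity), mul_one_div, div_self h1α.ne', Real.rpow_one]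
  have hfsum : Summable fun k => f k ^ (1/α) := by simpa only [hfP] using hmom
  have hgsum : Summable fun k => g k ^ (1/(1-α)) := by simpa only [hgQ] using hkraft.1
  have holder := Real.inner_le_Lp_mul_Lq_tsum_of_nonneg hconj hfnn hgnn hfsum hgsum
  simp only [hfg, hfP, hgQ, one_div_one_div] at holder
  set S := ∑' k : ℕ+, (p k) ^ α with hS
  set M := ∑' k : ℕ+, p k * (2:ℝ) ^ (t * (ℓ k : ℝ)) with hM
  have hMnn : 0 ≤ M := tsum_nonneg hpm
  have hkey : S ≤ M ^ α := by
    calc S ≤ M ^ α * (∑' k : ℕ+, (2:ℝ) ^ (-(ℓ k : ℝ))) ^ (1-α) := holder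
    _ ≤ M ^ α * 1 ^ (1-α) := by
        gcongr
        · exact hkraft.2
    _ = M ^ α := by rw [Real.one_rpow, mul_one]
  have hSpos : 0 < S := by
    obtain ⟨k, hk⟩ : ∃ k, 0 < p k := by
      by_contra h
      push_neg at h
      have : ∀ k, p k = 0 := fun k => le_antisymm (h k) (hpos k)
      simp [this] at hp1
    have : (p k) ^ α ≤ S := hren.le_tsum k fun j _ => Real.rpow_nonneg (hpos j) _
    have : (0:ℝ) < (p k) ^ α := Real.rpow_pos_of_pos hk _
    linarith [hren.le_tsum k fun j _ => Real.rpow_nonneg (hpos j) _]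
  have hMpos : 0 < M := by
    rcases hMnn.lt_or_eq with h | h
    · exact h
    · exfalso; rw [← h, Real.zero_rpow hα0.ne'] at hkey; linarith
  have hlog : Real.logb 2 S ≤ α * Real.logb 2 M := by
    calc Real.logb 2 S ≤ Real.logb 2 (M ^ α) :=
          Real.logb_le_logb_of_le (by norm_num) hSpos hkey
    _ = α * Real.logb 2 M := Real.logb_rpow_eq_mul_logb_of_pos hMpos
  have hratio : (1/(1-α)) * α = 1 / t := by
    rw [hα]; field_simp; rw [add_sub_cancel_right, div_self ht.ne']
  calc (1/(1-α)) * Real.logb 2 S ≤ (1/(1-α)) * (α * Real.logb 2 M) := by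
        apply mul_le_mul_of_nonneg_left hlog (by positivity)
  _ = (1/t) * Real.logb 2 M := by rw [← mul_assoc, hratio]
end
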